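/- Let Q ⪰ 0 symmetric, R ≻ 0 symmetric, A_0 ≻ 0 symmetric. The Bellman fixed-point identity z^⊤ A_0 z = min_{u ∈ ℝ^d} [ z^⊤ Q z + u^⊤ R u + (z+u)^⊤ A_0 (z+u) ] holds for all z ∈ ℝ^d if and only if Q = A_0 (R + A_0)^{−1} A_0. -/

import Mathlib

open Matrix

lemma sym_swap {d : ℕ} {M : Matrix (Fin d) (Fin d) ℝ} (hM : Mᵀ = M) (x y : Fin d → ℝ) :
    x ⬝ᵥ M *ᵥ y = y ⬝ᵥ M *ᵥ x := by
  rw [dotProduct_mulVec, ← mulVec_transpose, hM, dotProduct_comm]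

lemma sym_zero {d : ℕ} {M : Matrix (Fin d) (Fin d) ℝ} (hM : Mᵀ = M)
    (h : ∀ z : Fin d → ℝ, z ⬝ᵥ M *ᵥ z = 0) : M = 0 := by
  ext i j
  have h1 := h (Pi.single i 1 + Pi.single j 1)
  have h2 := h (Pi.single i 1)
  have h3 := h (Pi.single j 1)
  have hsw := sym_swap hM (Pi.single i (1:ℝ)) (Pi.single j 1)
  simp only [add_dotProduct, mulVec_add, dotProduct_add, mulVec_single, single_dotProduct,
    smul_eq_mul, mul_one, one_mul, Pi.smul_apply, op_smul_eq_mul, Matrix.col_apply] at h1 h2 h3 hsw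
  simp only [Matrix.zero_apply]
  nlinarith [h1, h2, h3, hsw]

theorem stmt_10 {d : ℕ} (Q R A0 : Matrix (Fin d) (Fin d) ℝ)
    (hQ : Q.PosSemidef) (hR : R.PosDef) (hA0 : A0.PosDef) :
    (∀ z : Fin d → ℝ,
        IsLeast {y : ℝ | ∃ u : Fin d → ℝ,
            y = z ⬝ᵥ Q *ᵥ z + u ⬝ᵥ R *ᵥ u + (z + u) ⬝ᵥ A0 *ᵥ (z + u)}
          (z ⬝ᵥ A0 *ᵥ z)) ↔ Q = A0 * (R + A0)⁻¹ * A0 := by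
  set S := R + A0 with hSdef
  have hS : S.PosDef := hR.add_posSemidef hA0.posSemidef
  have hSsym : Sᵀ = S := hS.isHermitian
  have hA0sym : A0ᵀ = A0 := hA0.isHermitian
  have hQsym : Qᵀ = Q := hQ.isHermitian
  have hSinv : S * S⁻¹ = 1 :=
    mul_nonsing_inv S ((isUnit_iff_isUnit_det S).mp hS.isUnit)
  have hSinvsym : (S⁻¹)ᵀ = S⁻¹ := by rw [transpose_nonsing_inv, hSsym]
  set M := A0 * S⁻¹ * A0 with hMdef
  have hMsym : Mᵀ = M := by
    rw [hMdef, transpose_mul, transpose_mul, hSinvsym, hA0sym, mul_assoc]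
  -- the key completing-the-square identity
  have key : ∀ z u : Fin d → ℝ,
      z ⬝ᵥ Q *ᵥ z + u ⬝ᵥ R *ᵥ u + (z + u) ⬝ᵥ A0 *ᵥ (z + u)
        = z ⬝ᵥ Q *ᵥ z + z ⬝ᵥ A0 *ᵥ z - z ⬝ᵥ M *ᵥ z
          + (u + S⁻¹ *ᵥ (A0 *ᵥ z)) ⬝ᵥ S *ᵥ (u + S⁻¹ *ᵥ (A0 *ᵥ z)) := by
    intro z u
    set v := S⁻¹ *ᵥ (A0 *ᵥ z) with hvdef
    have hv : S *ᵥ v = A0 *ᵥ z := by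
      rw [hvdef, mulVec_mulVec, hSinv, one_mulVec]
    have e1 : z ⬝ᵥ M *ᵥ z = v ⬝ᵥ S *ᵥ v := by
      rw [hMdef, ← mulVec_mulVec, ← mulVec_mulVec, ← hvdef, hv,
        sym_swap hA0sym z v, ← hv]
    have e2 : v ⬝ᵥ S *ᵥ u = u ⬝ᵥ A0 *ᵥ z := by
      rw [sym_swap hSsym v u, hv]
    have e2' : u ⬝ᵥ S *ᵥ v = u ⬝ᵥ A0 *ᵥ z := by rw [hv]
    have e3 : z ⬝ᵥ A0 *ᵥ u = u ⬝ᵥ A0 *ᵥ z := sym_swap hA0sym z u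
    have e4 : u ⬝ᵥ S *ᵥ u = u ⬝ᵥ R *ᵥ u + u ⬝ᵥ A0 *ᵥ u := by
      rw [hSdef, add_mulVec, dotProduct_add]
    simp only [mulVec_add, add_mulVec, dotProduct_add, add_dotProduct]
    rw [e1, e2, e2', e3, e4]
    ring
  constructor
  · intro h
    have hz : ∀ z : Fin d → ℝ, z ⬝ᵥ (Q - M) *ᵥ z = 0 := by
      intro z
      -- lower bound applied to u = -v
      have hle : z ⬝ᵥ A0 *ᵥ z ≤
          z ⬝ᵥ Q *ᵥ z + z ⬝ᵥ A0 *ᵥ z - z ⬝ᵥ M *ᵥ z := by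
        have h2 := (h z).2 ⟨-(S⁻¹ *ᵥ (A0 *ᵥ z)), rfl⟩
        rw [key z (-(S⁻¹ *ᵥ (A0 *ᵥ z))), neg_add_cancel, zero_dotProduct,
          add_zero] at h2
        exact h2
      -- membership
      obtain ⟨u₀, hu₀⟩ := (h z).1
      rw [key z u₀] at hu₀
      have hw : 0 ≤ (u₀ + S⁻¹ *ᵥ (A0 *ᵥ z)) ⬝ᵥ S *ᵥ (u₀ + S⁻¹ *ᵥ (A0 *ᵥ z)) := by
        simpa only [star_trivial] using hS.posSemidef.dotProduct_mulVec_nonneg (u₀ + S⁻¹ *ᵥ (A0 *ᵥ z))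
      rw [sub_mulVec, dotProduct_sub]
      linarith
    have : Q - M = 0 := by
      apply sym_zero _ hz
      rw [transpose_sub, hQsym, hMsym]
    exact sub_eq_zero.mp this
  · intro hQM z
    constructor
    · refine ⟨-(S⁻¹ *ᵥ (A0 *ᵥ z)), ?_⟩
      rw [key z (-(S⁻¹ *ᵥ (A0 *ᵥ z))), neg_add_cancel, zero_dotProduct, add_zero]
      have hzQ : z ⬝ᵥ Q *ᵥ z = z ⬝ᵥ M *ᵥ z := by rw [hQM]
      rw [hzQ]; ring
    · rintro y ⟨u, rfl⟩
      rw [key z u]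
      have hzQ : z ⬝ᵥ Q *ᵥ z = z ⬝ᵥ M *ᵥ z := by rw [hQM]
      have hw : 0 ≤ (u + S⁻¹ *ᵥ (A0 *ᵥ z)) ⬝ᵥ S *ᵥ (u + S⁻¹ *ᵥ (A0 *ᵥ z)) := by
        simpa only [star_trivial] using hS.posSemidef.dotProduct_mulVec_nonneg (u + S⁻¹ *ᵥ (A0 *ᵥ z))
      linarith
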